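/- Let M be a k-sheaf on a directed moment graph G with vertex set V (partially ordered by reachability, with all sets {≥ x} having the property that the graph structure is as in a moment graph). The following conditions are equivalent: (1) for all open subsets J' ⊆ J of V, the restriction map Γ(J, M) → Γ(J', M) is surjective; (2) for every vertex x ∈ V, the restriction map Γ({≥x}, M) → Γ({>x}, M) is surjective; (3) for every vertex x ∈ V, the image of the map d_x : M^x → ⊕_{E ∈ E_{δx}} M^E contains the submodule M^{δx} := u_x(Γ({>x}, M)). -/

import Mathlib

open MvPolynomial

/-- A directed moment graph over the lattice `Fin r → ℤ`, on a vertex set `V`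
partially ordered by the reachability relation (so each directed edge has source
strictly smaller than its target). -/
structure DirMomentGraph (V : Type) [PartialOrder V] (r : ℕ) where
  E : Type
  src : E → V
  tgt : E → V
  src_lt_tgt : ∀ e, src e < tgt e
  label : E → (Fin r → ℤ)
  label_ne_zero : ∀ e, label e ≠ 0

/-- A subset of the vertices is open if it is upward closed. -/
def IsOpenSubset {V : Type} [PartialOrder V] (J : Set V) : Prop :=
  ∀ ⦃y z : V⦄, y ∈ J → y ≤ z → z ∈ J

section

variable (k : Type) [CommRing k] {V : Type} [PartialOrder V] [Fintype V] {r : ℕ}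
  (G : DirMomentGraph V r)
  (MV : V → Type) [∀ x, AddCommGroup (MV x)] [∀ x, Module (MvPolynomial (Fin r) k) (MV x)]
  (ME : G.E → Type) [∀ e, AddCommGroup (ME e)] [∀ e, Module (MvPolynomial (Fin r) k) (ME e)]
  (ρs : ∀ e : G.E, MV (G.src e) →ₗ[MvPolynomial (Fin r) k] ME e)
  (ρt : ∀ e : G.E, MV (G.tgt e) →ₗ[MvPolynomial (Fin r) k] ME e)

/-- The space of sections of a sheaf over a subset `I` of the set of vertices. -/
def sections (I : Set V) : Set (∀ x, MV x) :=
  {m | ∀ e : G.E, G.src e ∈ I → G.tgt e ∈ I → ρs e (m (G.src e)) = ρt e (m (G.tgt e))}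

/-- For a sheaf `M` on a directed moment graph the following are equivalent:
(1) for all open `J' ⊆ J` the restriction `Γ(J,M) → Γ(J',M)` is surjective;
(2) for every vertex `x` the restriction `Γ({≥x},M) → Γ({>x},M)` is surjective;
(3) for every vertex `x` the image of `d_x : M^x → ⊕_{E ∈ E_{δx}} M^E` contains
`M^{δx} = u_x(Γ({>x},M))`. -/
theorem extension_tfae :
    ((∀ J J' : Set V, IsOpenSubset J → IsOpenSubset J' → J' ⊆ J →
        ∀ m' ∈ sections k G MV ME ρs ρt J', ∃ m ∈ sections k G MV ME ρs ρt J,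
          ∀ y ∈ J', m y = m' y) ↔
      (∀ x : V, ∀ m' ∈ sections k G MV ME ρs ρt {y | x < y},
        ∃ m ∈ sections k G MV ME ρs ρt {y | x ≤ y}, ∀ y, x < y → m y = m' y)) ∧
    ((∀ x : V, ∀ m' ∈ sections k G MV ME ρs ρt {y | x < y},
        ∃ m ∈ sections k G MV ME ρs ρt {y | x ≤ y}, ∀ y, x < y → m y = m' y) ↔
      (∀ x : V, ∀ m' ∈ sections k G MV ME ρs ρt {y | x < y}, ∃ a : MV x,
        ∀ (e : G.E) (h : G.src e = x),
          ρs e (cast (congrArg MV h.symm) a) = ρt e (m' (G.tgt e)))) := by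
  classical
  constructor
  · constructor
    · intro h1 x
      exact h1 {y | x ≤ y} {y | x < y} (fun y z hy hyz => le_trans hy hyz)
        (fun y z hy hyz => lt_of_lt_of_le hy hyz) (fun y hy => le_of_lt hy)
    · intro h2
      have key : ∀ n : ℕ, ∀ J J' : Set V, IsOpenSubset J → IsOpenSubset J' → J' ⊆ J →
          (J \ J').ncard ≤ n →
          ∀ m' ∈ sections k G MV ME ρs ρt J', ∃ m ∈ sections k G MV ME ρs ρt J,
            ∀ y ∈ J', m y = m' y := by
        intro n
        induction n with
        | zero =>
          intro J J' hJ hJ' hsub hcard m' hm'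
          have hJeq : J = J' := by
            have h0 : (J \ J').ncard = 0 := Nat.le_zero.mp hcard
            have : J \ J' = ∅ := (Set.ncard_eq_zero (Set.toFinite _)).mp h0
            exact Set.Subset.antisymm (Set.diff_eq_empty.mp this) hsub
          exact ⟨m', hJeq ▸ hm', fun y _ => rfl⟩
        | succ n ih =>
          intro J J' hJ hJ' hsub hcard m' hm'
          by_cases hempty : J ⊆ J'
          · have hJeq : J = J' := Set.Subset.antisymm hempty hsub
            exact ⟨m', hJeq ▸ hm', fun y _ => rfl⟩
          · obtain ⟨x, hxmem, hxmax⟩ : ∃ a ∈ J \ J', ∀ a' ∈ J \ J', id a ≤ id a' → id a = id a' := by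
              obtain ⟨a, ha⟩ := (Set.toFinite (J \ J')).exists_maximal (Set.diff_nonempty.mpr hempty)
              exact ⟨a, ha.1, fun a' h hle => le_antisymm hle (ha.2 h hle)⟩
            have hgt : {y | x < y} ⊆ J' := by
              intro z hz
              by_contra hzJ'
              have hzJ : z ∈ J := hJ hxmem.1 (le_of_lt hz)
              exact absurd (hxmax z ⟨hzJ, hzJ'⟩ (le_of_lt hz)) (ne_of_lt hz)
            have hm'gt : m' ∈ sections k G MV ME ρs ρt {y | x < y} :=
              fun e hs ht => hm' e (hgt hs) (hgt ht)
            obtain ⟨m₀, hm₀, hagree⟩ := h2 x m' hm'gt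
            set J'' : Set V := insert x J' with hJ''def
            have hJ''open : IsOpenSubset J'' := by
              intro y z hy hyz
              rcases hy with rfl | hy
              · rcases eq_or_lt_of_le hyz with rfl | hlt
                · exact Set.mem_insert _ _
                · exact Set.mem_insert_of_mem _ (hgt hlt)
              · exact Set.mem_insert_of_mem _ (hJ' hy hyz)
            have hJ''sub : J'' ⊆ J := by
              intro z hz
              rcases hz with rfl | hz
              · exact hxmem.1
              · exact hsub hz
            have hxJ' : x ∉ J' := hxmem.2
            let m'' : ∀ y, MV y := fun y =>
              if h : y = x then cast (congrArg MV h.symm) (m₀ x) else m' y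
            have hm''x : ∀ y, y ≠ x → m'' y = m' y := fun y hy => dif_neg hy
            have hm''sec : m'' ∈ sections k G MV ME ρs ρt J'' := by
              intro e hs ht
              have htne : G.tgt e ≠ x := by
                intro htx
                rcases hs with hsx | hsJ'
                · exact absurd (htx ▸ G.src_lt_tgt e) (hsx ▸ lt_irrefl x)
                · exact hxJ' (htx ▸ hJ' hsJ' (le_of_lt (G.src_lt_tgt e)))
              rw [hm''x _ htne]
              by_cases hsx : G.src e = x
              · have hts : x < G.tgt e := hsx ▸ G.src_lt_tgt e
                have : m'' (G.src e) = cast (congrArg MV hsx.symm) (m₀ x) := dif_pos hsx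
                rw [this]
                subst hsx
                simp only [cast_eq]
                rw [← hagree _ hts]
                exact hm₀ e (le_refl _) (le_of_lt hts)
              · rw [hm''x _ hsx]
                have hsJ' : G.src e ∈ J' := by
                  rcases hs with h | h
                  · exact absurd h hsx
                  · exact h
                have htJ' : G.tgt e ∈ J' := hJ' hsJ' (le_of_lt (G.src_lt_tgt e))
                exact hm' e hsJ' htJ'
            have hcard'' : (J \ J'').ncard ≤ n := by
              have heq : J \ J'' = (J \ J') \ {x} := by
                ext z
                simp only [hJ''def, Set.mem_diff, Set.mem_insert_iff, Set.mem_singleton_iff]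
                tauto
              have hlt : ((J \ J') \ {x}).ncard < (J \ J').ncard :=
                Set.ncard_diff_singleton_lt_of_mem hxmem (Set.toFinite _)
              rw [heq]
              omega
            obtain ⟨m, hmsec, hmagree⟩ := ih J J'' hJ hJ''open hJ''sub hcard'' m'' hm''sec
            refine ⟨m, hmsec, fun y hy => ?_⟩
            rw [hmagree y (Set.mem_insert_of_mem _ hy), hm''x y (fun h => hxJ' (h ▸ hy))]
      intro J J' hJ hJ' hsub m' hm'
      exact key (J \ J').ncard J J' hJ hJ' hsub le_rfl m' hm'
  · constructor
    · intro h2 x m' hm'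
      obtain ⟨m, hm, hagree⟩ := h2 x m' hm'
      refine ⟨m x, fun e h => ?_⟩
      subst h
      simp only [cast_eq]
      rw [← hagree _ (G.src_lt_tgt e)]
      exact hm e (le_refl _) (le_of_lt (G.src_lt_tgt e))
    · intro h3 x m' hm'
      obtain ⟨a, ha⟩ := h3 x m' hm'
      let m : ∀ y, MV y := fun y =>
        if h : y = x then cast (congrArg MV h.symm) a else m' y
      have hmne : ∀ y, y ≠ x → m y = m' y := fun y hy => dif_neg hy
      refine ⟨m, ?_, fun y hy => hmne y (ne_of_gt hy)⟩
      intro e hs ht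
      have htgt : x < G.tgt e := lt_of_le_of_lt hs (G.src_lt_tgt e)
      rw [hmne _ (ne_of_gt htgt)]
      by_cases hsx : G.src e = x
      · have : m (G.src e) = cast (congrArg MV hsx.symm) a := dif_pos hsx
        rw [this]
        exact ha e hsx
      · rw [hmne _ hsx]
        exact hm' e (lt_of_le_of_ne hs (fun h => hsx h.symm)) htgt

end
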